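/- For the Cayley graph of a Coxeter system (G,X) with respect to the generating set X, the geometric representation σ: G → GL(V) on V = Span_ℝ{α_x : x ∈ X} yields a geometric realization: assigning to an arrow x: g → gx the ray ℝ_{≥0}·σ_g(α_x) satisfies all four Matsumoto-graph axioms, with R⁺_g spanned by -σ_g(α_x), x ∈ X. -/

import Mathlib

/-- A (pre-)Matsumoto graph of degree `d` realized in the real vector space `M`:
vertices, oriented compact edges labelled by their root (ingoing at the target),
infinite edges attached to a single vertex and labelled by their root, and the
family of roots of the ingoing edges at each vertex. -/
structure MatsumotoGraph (d : ℕ) (M : Type*) [AddCommGroup M] [Module ℝ M] where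
  Vx : Type*
  adj : Vx → Vx → M → Prop
  inf : Vx → M → Prop
  basisAt : Vx → Fin d → M

namespace MatsumotoGraph

variable {d : ℕ} {M : Type*} [AddCommGroup M] [Module ℝ M] (G : MatsumotoGraph d M)

/-- The set of roots. -/
def R : Set M := {α | (∃ v v', G.adj v v' α) ∨ ∃ v, G.inf v α}

/-- Membership in the convex cone generated by the ingoing roots at `v`. -/
def inCone (v : G.Vx) (α : M) : Prop :=
  ∃ c : Fin d → ℝ, (∀ i, 0 ≤ c i) ∧ α = ∑ i, c i • G.basisAt v i

/-- The positive system at a vertex. -/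
def pos (v : G.Vx) : Set M := {α ∈ G.R | G.inCone v α}

/-- The negative system at a vertex. -/
def neg (v : G.Vx) : Set M := G.R \ G.pos v

/-- The convex cone generated by two vectors. -/
def cone2 (x y : M) : Set M := {z | ∃ a b : ℝ, 0 ≤ a ∧ 0 ≤ b ∧ z = a • x + b • y}

/-- The axioms of a Matsumoto graph. -/
structure Axioms : Prop where
  adj_symm : ∀ {v v' α}, G.adj v v' α → G.adj v' v (-α)
  basis_indep : ∀ v, LinearIndependent ℝ (G.basisAt v)
  basis_span : ∀ v, Submodule.span ℝ (Set.range (G.basisAt v)) = ⊤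
  ingoing : ∀ v α, ((∃ v', G.adj v' v α) ∨ G.inf v α) ↔ ∃ i, α = G.basisAt v i
  inf_noninv : ∀ v α, G.inf v α → -α ∉ G.R
  step : ∀ v v' α, G.adj v v' α → G.pos v' \ G.pos v = {α}
  posdet : ∀ v v', G.pos v = G.pos v' → v = v'
  connected : ∀ v v', Relation.ReflTransGen (fun a b => ∃ α, G.adj a b α) v v'

/-- Walks in the graph (along compact edges), recording the roots of the traversed edges. -/
inductive Walk : G.Vx → G.Vx → Type _
  | nil (v : G.Vx) : Walk v v
  | cons {v w u : G.Vx} (α : M) (h : G.adj v w α) (p : Walk w u) : Walk v u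

variable {G}

def Walk.length : ∀ {v v' : G.Vx}, G.Walk v v' → ℕ
  | _, _, .nil _ => 0
  | _, _, .cons _ _ p => p.length + 1

def Walk.roots : ∀ {v v' : G.Vx}, G.Walk v v' → List M
  | _, _, .nil _ => []
  | _, _, .cons α _ p => α :: p.roots

def Walk.append : ∀ {v w u : G.Vx}, G.Walk v w → G.Walk w u → G.Walk v u
  | _, _, _, .nil _, q => q
  | _, _, _, .cons α h p, q => .cons α h (p.append q)

variable (G)

/-- The graph distance between two vertices. -/
noncomputable def dist (v v' : G.Vx) : ℕ := sInf {n | ∃ p : G.Walk v v', p.length = n}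

end MatsumotoGraph


open CoxeterSystem Real

set_option linter.unusedSectionVars false

namespace CayleyAux

variable {B W : Type*} [Fintype B] [DecidableEq B] [Group W]
  {M : CoxeterMatrix B} (cs : CoxeterSystem M W)
  (σ : W →* ((B → ℝ) ≃ₗ[ℝ] (B → ℝ)))

noncomputable def e (x : B) : B → ℝ := Pi.single x 1

variable (hσ : ∀ s t : B, σ (cs.simple s) (Pi.single t 1 : B → ℝ) =
      (Pi.single t 1 : B → ℝ) + (2 * Real.cos (Real.pi / (M s t : ℝ))) • (Pi.single s 1 : B → ℝ))

noncomputable def cM (M : CoxeterMatrix B) (i j : B) : ℝ := 2 * Real.cos (Real.pi / (M i j : ℝ))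

lemma cM_symm (i j : B) : cM M i j = cM M j i := by rw [cM, cM, M.symmetric]

lemma basis_expand (v : B → ℝ) : v = ∑ y, v y • e y := by
  funext b
  rw [Finset.sum_apply]
  simp [e, Pi.single_apply]

include hσ

lemma sigma_simple (j y : B) : σ (cs.simple j) (e y) = e y + cM M j y • e j := hσ j y

lemma sigma_simple_self (j : B) : σ (cs.simple j) (e j) = -e j := by
  have h := hσ j j
  rw [M.diagonal j] at h
  norm_num at h
  rw [e, h]
  module

lemma sigma_apply (j : B) (v : B → ℝ) :
    σ (cs.simple j) v = v + (∑ y, cM M j y * v y) • e j := by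
  conv_lhs => rw [basis_expand v, map_sum]
  simp_rw [map_smul, sigma_simple cs σ hσ, smul_add, smul_smul]
  rw [Finset.sum_add_distrib]
  congr 1
  · exact (basis_expand v).symm
  · rw [← Finset.sum_smul]
    congr 1
    exact Finset.sum_congr rfl fun y _ => mul_comm _ _

lemma sigma_coord (j : B) (v : B → ℝ) (b : B) (hb : b ≠ j) :
    σ (cs.simple j) v b = v b := by
  rw [sigma_apply cs σ hσ]
  simp [e, Pi.single_apply, hb]

omit hσ

lemma sigma_inv_apply (g : W) (v : B → ℝ) : σ g⁻¹ (σ g v) = v := by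
  have : σ g⁻¹ (σ g v) = (σ g⁻¹ * σ g) v := rfl
  rw [this, ← map_mul, inv_mul_cancel, map_one]; rfl

lemma sigma_symm_eq (g : W) (v : B → ℝ) : (σ g).symm v = σ g⁻¹ v := by
  apply (σ g).injective
  rw [LinearEquiv.apply_symm_apply]
  have : σ g (σ g⁻¹ v) = (σ g * σ g⁻¹) v := rfl
  rw [this, ← map_mul, mul_inv_cancel, map_one]; rfl


/-! ### The invariant bilinear form -/

noncomputable def kf (M : CoxeterMatrix B) (i j : B) : ℝ := -Real.cos (Real.pi / (M i j : ℝ))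

lemma kf_symm (i j : B) : kf M i j = kf M j i := by rw [kf, kf, M.symmetric]

lemma kf_diag (i : B) : kf M i i = 1 := by rw [kf, M.diagonal]; norm_num

noncomputable def Bf (M : CoxeterMatrix B) [Fintype B] (v w : B → ℝ) : ℝ :=
  ∑ p, ∑ q, v p * w q * kf M p q

lemma Bf_symm (v w : B → ℝ) : Bf M v w = Bf M w v := by
  rw [Bf, Bf, Finset.sum_comm]
  exact Finset.sum_congr rfl fun p _ => Finset.sum_congr rfl fun q _ => by
    rw [kf_symm]; ring

lemma Bf_add_left (u v w : B → ℝ) : Bf M (u + v) w = Bf M u w + Bf M v w := by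
  rw [Bf, Bf, Bf, ← Finset.sum_add_distrib]
  exact Finset.sum_congr rfl fun p _ => by
    rw [← Finset.sum_add_distrib]
    exact Finset.sum_congr rfl fun q _ => by simp [Pi.add_apply]; ring

lemma Bf_smul_left (a : ℝ) (v w : B → ℝ) : Bf M (a • v) w = a * Bf M v w := by
  rw [Bf, Bf, Finset.mul_sum]
  exact Finset.sum_congr rfl fun p _ => by
    rw [Finset.mul_sum]
    exact Finset.sum_congr rfl fun q _ => by simp [Pi.smul_apply]; ring

lemma Bf_single_left (j : B) (w : B → ℝ) : Bf M (e j) w = ∑ q, w q * kf M j q := by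
  rw [Bf]
  rw [Finset.sum_eq_single j]
  · exact Finset.sum_congr rfl fun q _ => by simp [e, Pi.single_apply]
  · intro p _ hp
    apply Finset.sum_eq_zero
    intro q _
    simp [e, Pi.single_apply, Ne.symm hp]
  · intro h; exact absurd (Finset.mem_univ j) h

lemma Bf_single_single (i j : B) : Bf M (e i) (e j) = kf M i j := by
  rw [Bf_single_left, Finset.sum_eq_single j]
  · simp [e]
  · intro q _ hq; simp [e, Pi.single_apply, hq]
  · intro h; exact absurd (Finset.mem_univ j) h

include hσ

lemma Bf_sigma_simple (j : B) (v w : B → ℝ) :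
    Bf M (σ (cs.simple j) v) (σ (cs.simple j) w) = Bf M v w := by
  rw [sigma_apply cs σ hσ, sigma_apply cs σ hσ]
  have hc : ∀ u : B → ℝ, (∑ y, cM M j y * u y) = -2 * Bf M (e j) u := by
    intro u
    rw [Bf_single_left, Finset.mul_sum]
    exact Finset.sum_congr rfl fun y _ => by rw [cM, kf]; ring
  rw [hc, hc]
  have hr : ∀ u₁ u₂ u₃ : B → ℝ, Bf M u₁ (u₂ + u₃) = Bf M u₁ u₂ + Bf M u₁ u₃ := by
    intro u₁ u₂ u₃; rw [Bf_symm, Bf_add_left, Bf_symm u₂, Bf_symm u₃]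
  have hs : ∀ (a : ℝ) (u₁ u₂ : B → ℝ), Bf M u₁ (a • u₂) = a * Bf M u₁ u₂ := by
    intro a u₁ u₂; rw [Bf_symm, Bf_smul_left, Bf_symm]
  rw [Bf_add_left, hr, hr, Bf_smul_left, Bf_smul_left, hs, hs, Bf_single_single, kf_diag,
    Bf_symm v (e j)]
  ring

lemma Bf_sigma (g : W) (v w : B → ℝ) : Bf M (σ g v) (σ g w) = Bf M v w := by
  obtain ⟨l, rfl⟩ := cs.wordProd_surjective g
  induction l generalizing v w with
  | nil => rw [cs.wordProd_nil, map_one]; rfl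
  | cons a l ih =>
    rw [cs.wordProd_cons, map_mul]
    have h1 : ∀ u, σ (cs.simple a) (σ (cs.wordProd l) u)
        = (σ (cs.simple a) * σ (cs.wordProd l)) u := fun u => rfl
    show Bf M ((σ (cs.simple a) * σ (cs.wordProd l)) v) _ = _
    rw [← h1, ← h1, Bf_sigma_simple cs σ hσ, ih]


omit hσ

/-! ### The coefficient sequence -/

noncomputable def fseq (c : ℝ) : ℕ → ℝ
  | 0 => 0
  | 1 => 1
  | (n+2) => c * fseq c (n+1) - fseq c n

@[simp] lemma fseq_zero (c : ℝ) : fseq c 0 = 0 := rfl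
@[simp] lemma fseq_one (c : ℝ) : fseq c 1 = 1 := rfl
lemma fseq_succ_succ (c : ℝ) (n : ℕ) : fseq c (n+2) = c * fseq c (n+1) - fseq c n := rfl

lemma fseq_two : ∀ k, fseq 2 k = k := by
  intro k
  induction k using Nat.twoStepInduction with
  | zero => simp
  | one => simp
  | more n ih1 ih2 =>
    rw [fseq_succ_succ, ih1, ih2]
    push_cast
    ring

lemma fseq_sin (m : ℕ) (hm : 1 ≤ m) (k : ℕ) :
    fseq (2 * Real.cos (Real.pi / m)) k * Real.sin (Real.pi / m)
      = Real.sin (k * (Real.pi / m)) := by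
  induction k using Nat.twoStepInduction with
  | zero => simp
  | one => simp
  | more n ih1 ih2 =>
    rw [fseq_succ_succ, sub_mul, mul_assoc, ih2, ih1]
    push_cast
    have h1 : ((n : ℝ) + 2) * (Real.pi / m) = ((n + 1) * (Real.pi / m)) + Real.pi / m := by ring
    have h2 : (n : ℝ) * (Real.pi / m) = ((n + 1) * (Real.pi / m)) - Real.pi / m := by ring
    rw [h1, h2, Real.sin_add, Real.sin_sub]
    ring

lemma fseq_nonneg (m : ℕ) (k : ℕ) (h : m = 0 ∨ k ≤ m) :
    0 ≤ fseq (2 * Real.cos (Real.pi / m)) k := by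
  rcases Nat.eq_zero_or_pos m with rfl | hm
  · norm_num
    rw [fseq_two]
    positivity
  · have hkm : k ≤ m := by omega
    rcases Nat.lt_or_ge m 2 with hm2 | hm2
    · interval_cases m
      interval_cases k
      · norm_num
      · norm_num
    · have hm2' : (2:ℝ) ≤ (m:ℝ) := by exact_mod_cast hm2
      have hsin : 0 < Real.sin (Real.pi / m) := by
        apply Real.sin_pos_of_pos_of_lt_pi
        · positivity
        · rw [div_lt_iff₀ (by positivity)]
          nlinarith [Real.pi_pos]
      have hk : 0 ≤ Real.sin (k * (Real.pi / m)) := by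
        apply Real.sin_nonneg_of_nonneg_of_le_pi
        · positivity
        · rw [← mul_div_assoc, div_le_iff₀ (by positivity)]
          have : (k : ℝ) ≤ m := by exact_mod_cast hkm
          nlinarith [Real.pi_pos]
      nlinarith [fseq_sin m hm k]


include hσ

lemma qlem : ∀ (n : ℕ) (i j : B),
    (Even n →
      σ (cs.wordProd (alternatingWord i j n)) (e i)
          = fseq (cM M i j) (n+1) • e i + fseq (cM M i j) n • e j ∧
      σ (cs.wordProd (alternatingWord i j n)) (e j)
          = if n = 0 then e j else -(fseq (cM M i j) n • e i + fseq (cM M i j) (n-1) • e j)) ∧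
    (Odd n →
      σ (cs.wordProd (alternatingWord i j n)) (e i)
          = fseq (cM M i j) n • e i + fseq (cM M i j) (n+1) • e j ∧
      σ (cs.wordProd (alternatingWord i j n)) (e j)
          = -(fseq (cM M i j) (n-1) • e i + fseq (cM M i j) n • e j)) := by
  intro n
  induction n with
  | zero =>
    intro i j
    refine ⟨fun _ => ⟨?_, ?_⟩, fun h => absurd h (by decide)⟩
    · show σ 1 (e i) = _
      rw [map_one]
      show e i = _
      simp
    · show σ 1 (e j) = _
      rw [map_one]
      show e j = _
      simp
  | succ n ih =>
    intro i j
    have hword : cs.wordProd (alternatingWord i j (n+1))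
        = cs.wordProd (alternatingWord j i n) * cs.simple j := by
      rw [alternatingWord_succ, cs.wordProd_concat]
    have happ : ∀ v, σ (cs.wordProd (alternatingWord i j (n+1))) v
        = σ (cs.wordProd (alternatingWord j i n)) (σ (cs.simple j) v) := by
      intro v; rw [hword, map_mul]; rfl
    rcases Nat.even_or_odd n with hn | hn
    · -- n even, n+1 odd
      obtain ⟨g_e, h_e⟩ := (ih j i).1 hn
      rw [← cM_symm i j] at g_e h_e
      constructor
      · intro h
        rw [Nat.even_add_one] at h
        exact absurd hn h
      · intro _
        constructor
        · rw [happ, sigma_simple cs σ hσ, map_add, map_smul, g_e, h_e, ← cM_symm i j]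
          rcases Nat.eq_zero_or_pos n with rfl | hn1
          · rw [if_pos rfl]
            have h2 : fseq (cM M i j) (0+1+1) = cM M i j * 1 - 0 := rfl
            have e1 : fseq (cM M i j) (0+1) = 1 := rfl
            have e0 : fseq (cM M i j) 0 = 0 := rfl
            rw [h2, e1, e0]
            module
          · obtain ⟨m, rfl⟩ : ∃ m, n = m + 1 := ⟨n - 1, by omega⟩
            rw [if_neg (by omega)]
            have h2 : fseq (cM M i j) (m+1+1+1) = cM M i j * fseq (cM M i j) (m+1+1) - fseq (cM M i j) (m+1) := rfl
            have h3 : fseq (cM M i j) (m+1+1) = cM M i j * fseq (cM M i j) (m+1) - fseq (cM M i j) m := rfl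
            have h4 : (m + 1 - 1) = m := by omega
            rw [h4, h2, h3]
            module
        · rw [happ, sigma_simple_self cs σ hσ, map_neg, g_e]
          have h4 : (n + 1 - 1) = n := by omega
          rw [h4]
          module
    · -- n odd, n+1 even
      obtain ⟨g_o, h_o⟩ := (ih j i).2 hn
      rw [← cM_symm i j] at g_o h_o
      obtain ⟨m, rfl⟩ : ∃ m, n = m + 1 := ⟨n - 1, by rcases hn with ⟨k, hk⟩; omega⟩
      constructor
      · intro _
        constructor
        · rw [happ, sigma_simple cs σ hσ, map_add, map_smul, g_o, h_o, ← cM_symm i j]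
          have h2 : fseq (cM M i j) (m+1+1+1) = cM M i j * fseq (cM M i j) (m+1+1) - fseq (cM M i j) (m+1) := rfl
          have h3 : fseq (cM M i j) (m+1+1) = cM M i j * fseq (cM M i j) (m+1) - fseq (cM M i j) m := rfl
          have h4 : (m + 1 - 1) = m := by omega
          rw [h4, h2, h3]
          module
        · rw [if_neg (by omega)]
          rw [happ, sigma_simple_self cs σ hσ, map_neg, g_o]
          have h4 : (m + 1 + 1 - 1) = m + 1 := by omega
          rw [h4]
          module
      · intro h
        rcases hn with ⟨a, ha⟩
        rcases h with ⟨b, hb⟩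
        omega


omit hσ

lemma alt_of_reduced (x t : B) (hxt : x ≠ t) :
    ∀ l : List B, (∀ a ∈ l, a = x ∨ a = t) → cs.IsReduced (l ++ [x]) →
      l = alternatingWord x t l.length := by
  intro l
  induction l with
  | nil => intro _ _; rfl
  | cons a l ih =>
    intro hmem hred
    have hred2 : cs.IsReduced (l ++ [x]) := by
      have h := CoxeterSystem.IsReduced.drop (ω := (a :: l) ++ [x]) hred (j := 1)
      simpa using h
    have hl : l = alternatingWord x t l.length := ih (fun b hb => hmem b (by simp [hb])) hred2
    cases l with
    | nil =>
      rcases hmem a (by simp) with rfl | rfl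
      · -- a = x : contradiction with reducedness of [x, x]
        exfalso
        have : cs.wordProd ([a] ++ [a]) = 1 := by
          rw [cs.wordProd_append, cs.wordProd_singleton, cs.simple_mul_simple_self]
        have hred' := hred
        unfold CoxeterSystem.IsReduced at hred'
        rw [this] at hred'
        simp at hred'
      · -- a = t
        show [a] = alternatingWord x a 1
        rw [alternatingWord_succ]
        rfl
    | cons b l2 =>
      have hlen : (b :: l2).length = l2.length + 1 := rfl
      rw [hlen, alternatingWord_succ'] at hl
      obtain ⟨hb, hl2⟩ := List.cons_eq_cons.mp hl
      have hab : a ≠ b := by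
        rintro rfl
        have hcollapse : cs.wordProd ((a :: a :: l2) ++ [x]) = cs.wordProd (l2 ++ [x]) := by
          simp only [List.cons_append, cs.wordProd_cons]
          rw [cs.simple_mul_simple_cancel_left]
        have h1 : cs.length (cs.wordProd (l2 ++ [x])) ≤ l2.length + 1 := by
          simpa using cs.length_wordProd_le (l2 ++ [x])
        have hred' := hred
        unfold CoxeterSystem.IsReduced at hred'
        rw [hcollapse] at hred'
        simp at hred'
        omega
      have hl' : b :: l2 = alternatingWord x t (l2.length + 1) := by
        rw [alternatingWord_succ']
        exact List.cons_eq_cons.mpr ⟨hb, hl2⟩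
      show a :: b :: l2 = alternatingWord x t (l2.length + 1 + 1)
      rw [alternatingWord_succ', ← hl']
      congr 1
      rcases Nat.even_or_odd l2.length with hp | hp
      · have hbt : b = t := by rw [hb, if_pos hp]
        have ha : a = x := by
          rcases hmem a (by simp) with h | h
          · exact h
          · exact absurd (h.trans hbt.symm) hab
        rw [ha, if_neg (by rw [Nat.even_add_one]; exact not_not_intro hp)]
      · have hbx : b = x := by rw [hb, if_neg (Nat.not_even_iff_odd.mpr hp)]
        have ha : a = t := by
          rcases hmem a (by simp) with h | h
          · exact absurd (h.trans hbx.symm) hab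
          · exact h
        rw [ha, if_pos (Nat.even_add_one.mpr (Nat.not_even_iff_odd.mpr hp))]


lemma greedy : ∀ (n : ℕ) (w : W), cs.length w ≤ n → ∀ x t : B,
    ∃ (u : W) (l : List B), (∀ a ∈ l, a = x ∨ a = t) ∧ w = u * cs.wordProd l ∧
      cs.length w = cs.length u + l.length ∧
      ¬cs.IsRightDescent u x ∧ ¬cs.IsRightDescent u t := by
  intro n
  induction n with
  | zero =>
    intro w hw x t
    have hw1 : w = 1 := cs.length_eq_zero_iff.mp (Nat.le_zero.mp hw)
    subst hw1
    exact ⟨1, [], by simp, by simp, by simp, cs.not_isRightDescent_one x,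
      cs.not_isRightDescent_one t⟩
  | succ n ih =>
    intro w hw x t
    have key : ∀ y : B, (y = x ∨ y = t) → cs.IsRightDescent w y →
        ∃ (u : W) (l : List B), (∀ a ∈ l, a = x ∨ a = t) ∧ w = u * cs.wordProd l ∧
          cs.length w = cs.length u + l.length ∧
          ¬cs.IsRightDescent u x ∧ ¬cs.IsRightDescent u t := by
      intro y hyxt hy
      have hlen : cs.length (w * cs.simple y) + 1 = cs.length w := cs.isRightDescent_iff.mp hy
      obtain ⟨u, l, hmem, hprod, hsum, hux, hut⟩ := ih (w * cs.simple y) (by omega) x t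
      refine ⟨u, l ++ [y], ?_, ?_, ?_, hux, hut⟩
      · intro a ha
        rcases List.mem_append.mp ha with h | h
        · exact hmem a h
        · simp at h; rw [h]; exact hyxt
      · have hcan : w = (w * cs.simple y) * cs.simple y := (cs.simple_mul_simple_cancel_right y).symm
        rw [hcan, hprod, cs.wordProd_append, cs.wordProd_singleton, mul_assoc]
      · rw [List.length_append]
        simp only [List.length_singleton]
        omega
    by_cases hx : cs.IsRightDescent w x
    · exact key x (Or.inl rfl) hx
    by_cases ht : cs.IsRightDescent w t
    · exact key t (Or.inr rfl) ht
    · exact ⟨w, [], by simp, by simp, by simp, hx, ht⟩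

lemma e_nonneg (x b : B) : 0 ≤ e x b := by
  rw [e, Pi.single_apply]
  split <;> norm_num

include hσ

lemma core : ∀ (n : ℕ) (w : W), cs.length w ≤ n → ∀ x : B, ¬cs.IsRightDescent w x →
    ∀ b : B, 0 ≤ σ w (e x) b := by
  intro n
  induction n with
  | zero =>
    intro w hw x _ b
    have hw1 : w = 1 := cs.length_eq_zero_iff.mp (Nat.le_zero.mp hw)
    subst hw1
    rw [map_one]
    exact e_nonneg x b
  | succ n ih =>
    intro w hw x hx b
    by_cases hw1 : w = 1
    · subst hw1; rw [map_one]; exact e_nonneg x b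
    obtain ⟨t, ht⟩ := cs.exists_rightDescent_of_ne_one hw1
    have hxt : x ≠ t := fun h => hx (h ▸ ht)
    obtain ⟨u, l, hmem, hprod, hsum, hux, hut⟩ := greedy cs (n+1) w hw x t
    have hlpos : l ≠ [] := by
      rintro rfl
      rw [cs.wordProd_nil, mul_one] at hprod
      exact hut (hprod ▸ ht)
    have hul : cs.length u ≤ n := by
      have := List.length_pos_iff.mpr hlpos
      omega
    have hwx : cs.length (w * cs.simple x) = cs.length w + 1 := cs.not_isRightDescent_iff.mp hx
    have hprodx : w * cs.simple x = u * cs.wordProd (l ++ [x]) := by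
      rw [hprod, cs.wordProd_append, cs.wordProd_singleton, mul_assoc]
    have hred : cs.IsReduced (l ++ [x]) := by
      have h1 : cs.length (u * cs.wordProd (l ++ [x]))
          ≤ cs.length u + cs.length (cs.wordProd (l ++ [x])) := cs.length_mul_le _ _
      have h2 : cs.length (cs.wordProd (l ++ [x])) ≤ l.length + 1 := by
        simpa using cs.length_wordProd_le (l ++ [x])
      rw [hprodx] at hwx
      unfold CoxeterSystem.IsReduced
      have h3 : (l ++ [x]).length = l.length + 1 := by simp
      rw [h3]
      omega
    have halt : l = alternatingWord x t l.length := alt_of_reduced cs x t hxt l hmem hred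
    have hconcat : l ++ [x] = alternatingWord t x (l.length + 1) := by
      rw [alternatingWord_succ, List.concat_eq_append, ← halt]
    have hbound : M t x = 0 ∨ l.length + 1 ≤ M t x := by
      by_contra hc
      push_neg at hc
      obtain ⟨h0, hlt⟩ := hc
      exact (cs.not_isReduced_alternatingWord t x h0 (by omega)) (hconcat ▸ hred)
    have hMxt : M x t = M t x := M.symmetric x t
    have hf0 : 0 ≤ fseq (cM M x t) l.length := by
      show 0 ≤ fseq (2 * Real.cos (Real.pi / (M x t : ℝ))) l.length
      exact fseq_nonneg (M x t) l.length (by omega)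
    have hf1 : 0 ≤ fseq (cM M x t) (l.length + 1) := by
      show 0 ≤ fseq (2 * Real.cos (Real.pi / (M x t : ℝ))) (l.length + 1)
      exact fseq_nonneg (M x t) (l.length + 1) (by omega)
    have hq := qlem cs σ hσ l.length x t
    have happly : σ w (e x) = σ u (σ (cs.wordProd l) (e x)) := by
      rw [hprod, map_mul]; rfl
    have h1 := ih u hul x hux b
    have h2 := ih u hul t hut b
    rcases Nat.even_or_odd l.length with hp | hp
    · have hform := (hq.1 hp).1
      rw [← halt] at hform
      rw [happly, hform, map_add, map_smul, map_smul]
      simp only [Pi.add_apply, Pi.smul_apply, smul_eq_mul]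
      exact add_nonneg (mul_nonneg hf1 h1) (mul_nonneg hf0 h2)
    · have hform := (hq.2 hp).1
      rw [← halt] at hform
      rw [happly, hform, map_add, map_smul, map_smul]
      simp only [Pi.add_apply, Pi.smul_apply, smul_eq_mul]
      exact add_nonneg (mul_nonneg hf0 h1) (mul_nonneg hf1 h2)

lemma negcore (w : W) (x : B) (hx : cs.IsRightDescent w x) (b : B) : σ w (e x) b ≤ 0 := by
  have h1 : ¬cs.IsRightDescent (w * cs.simple x) x :=
    (cs.isRightDescent_iff_not_isRightDescent_mul).mp hx
  have h2 : σ w (e x) = -(σ (w * cs.simple x) (e x)) := by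
    conv_lhs => rw [← cs.simple_mul_simple_cancel_right (w := w) x]
    have : σ (w * cs.simple x * cs.simple x) (e x)
        = σ (w * cs.simple x) (σ (cs.simple x) (e x)) := by rw [map_mul]; rfl
    rw [this, sigma_simple_self cs σ hσ, map_neg]
  rw [h2]
  have := core cs σ hσ (cs.length (w * cs.simple x)) (w * cs.simple x) le_rfl x h1 b
  simp only [Pi.neg_apply]
  linarith


omit hσ

variable (M) in
/-- The Cayley graph realization. -/
@[reducible] noncomputable def CG : MatsumotoGraph (Fintype.card B) (B → ℝ) where
  Vx := W
  adj := fun g g' β => ∃ x : B, g' = g * cs.simple x ∧ β = σ g (Pi.single x 1 : B → ℝ)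
  inf := fun _ _ => False
  basisAt := fun g i => -(σ g (Pi.single ((Fintype.equivFin B).symm i) 1 : B → ℝ))

lemma CG_adj (g g' : W) (β : B → ℝ) :
    (CG M cs σ).adj g g' β ↔ ∃ x : B, g' = g * cs.simple x ∧ β = σ g (e x) := Iff.rfl

lemma mulapp (g h : W) (v : B → ℝ) : σ (g * h) v = σ g (σ h v) := by rw [map_mul]; rfl

lemma CG_R (β : B → ℝ) : β ∈ (CG M cs σ).R ↔ ∃ (u : W) (y : B), β = σ u (e y) := by
  constructor
  · rintro (⟨g, g', x, _, hβ⟩ | ⟨_, h⟩)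
    · exact ⟨g, x, hβ⟩
    · exact h.elim
  · rintro ⟨u, y, h⟩
    exact Or.inl ⟨u, u * cs.simple y, y, rfl, h⟩

lemma CG_inCone (g : W) (β : B → ℝ) :
    (CG M cs σ).inCone g β ↔ ∀ y, σ g⁻¹ β y ≤ 0 := by
  constructor
  · rintro ⟨c, hc, hβ⟩ y
    have : σ g⁻¹ β = ∑ i, c i • (-(e ((Fintype.equivFin B).symm i))) := by
      rw [hβ, map_sum]
      refine Finset.sum_congr rfl fun i _ => ?_
      rw [map_smul]
      show c i • σ g⁻¹ (-(σ g (e _))) = _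
      rw [map_neg, sigma_inv_apply]
    rw [this, Finset.sum_apply]
    apply Finset.sum_nonpos
    intro i _
    simp only [Pi.smul_apply, Pi.neg_apply, smul_eq_mul]
    have h1 := e_nonneg ((Fintype.equivFin B).symm i) y
    have h2 := hc i
    nlinarith
  · intro h
    refine ⟨fun i => -(σ g⁻¹ β ((Fintype.equivFin B).symm i)),
      fun i => by have := h ((Fintype.equivFin B).symm i); linarith, ?_⟩
    have hterm : ∀ i : Fin (Fintype.card B),
        (-(σ g⁻¹ β ((Fintype.equivFin B).symm i))) • (CG M cs σ).basisAt g i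
          = σ g ((σ g⁻¹ β ((Fintype.equivFin B).symm i)) • e ((Fintype.equivFin B).symm i)) := by
      intro i
      show _ • (-(σ g (e _))) = _
      rw [neg_smul_neg, map_smul]
    calc β = σ g (σ g⁻¹ β) := by
            have := sigma_inv_apply σ g⁻¹ β
            rw [inv_inv] at this
            exact this.symm
      _ = σ g (∑ y, (σ g⁻¹ β) y • e y) := by rw [← basis_expand]
      _ = σ g (∑ i, (σ g⁻¹ β) ((Fintype.equivFin B).symm i) • e ((Fintype.equivFin B).symm i)) := by
            rw [Equiv.sum_comp (Fintype.equivFin B).symm (fun y => (σ g⁻¹ β) y • e y)]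
      _ = ∑ i, (-(σ g⁻¹ β ((Fintype.equivFin B).symm i))) • (CG M cs σ).basisAt g i := by
            rw [map_sum]
            exact (Finset.sum_congr rfl fun i _ => (hterm i)).symm

lemma CG_pos (g : W) (β : B → ℝ) :
    β ∈ (CG M cs σ).pos g ↔ (∃ (u : W) (y : B), β = σ u (e y)) ∧ ∀ y, σ g⁻¹ β y ≤ 0 := by
  rw [MatsumotoGraph.pos, Set.mem_sep_iff, CG_R, CG_inCone]

include hσ

lemma sigma_dich (u : W) (y : B) :
    (∀ b, 0 ≤ σ u (e y) b) ∨ (∀ b, σ u (e y) b ≤ 0) := by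
  by_cases h : cs.IsRightDescent u y
  · exact Or.inr (negcore cs σ hσ u y h)
  · exact Or.inl (core cs σ hσ (cs.length u) u le_rfl y h)

lemma sigma_norm (u : W) (y : B) : Bf M (σ u (e y)) (σ u (e y)) = 1 := by
  rw [Bf_sigma cs σ hσ, Bf_single_single, kf_diag]


omit hσ

lemma CG_expand (g : W) (β : B → ℝ) :
    β = ∑ i, (-(σ g⁻¹ β ((Fintype.equivFin B).symm i))) • (CG M cs σ).basisAt g i := by
  have hterm : ∀ i : Fin (Fintype.card B),
      (-(σ g⁻¹ β ((Fintype.equivFin B).symm i))) • (CG M cs σ).basisAt g i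
        = σ g ((σ g⁻¹ β ((Fintype.equivFin B).symm i)) • e ((Fintype.equivFin B).symm i)) := by
    intro i
    show _ • (-(σ g (e _))) = _
    rw [neg_smul_neg, map_smul]
  calc β = σ g (σ g⁻¹ β) := by
          have := sigma_inv_apply σ g⁻¹ β
          rw [inv_inv] at this
          exact this.symm
    _ = σ g (∑ y, (σ g⁻¹ β) y • e y) := by rw [← basis_expand]
    _ = σ g (∑ i, (σ g⁻¹ β) ((Fintype.equivFin B).symm i) • e ((Fintype.equivFin B).symm i)) := by
          rw [Equiv.sum_comp (Fintype.equivFin B).symm (fun y => (σ g⁻¹ β) y • e y)]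
    _ = ∑ i, (-(σ g⁻¹ β ((Fintype.equivFin B).symm i))) • (CG M cs σ).basisAt g i := by
          rw [map_sum]
          exact (Finset.sum_congr rfl fun i _ => (hterm i)).symm

include hσ

lemma main : (CG M cs σ).Axioms := by
  have hee : ∀ x : B, (Pi.single x 1 : B → ℝ) = e x := fun _ => rfl
  refine { adj_symm := ?_, basis_indep := ?_, basis_span := ?_, ingoing := ?_,
           inf_noninv := ?_, step := ?_, posdet := ?_, connected := ?_ }
  · -- adj_symm
    intro v v' α h
    obtain ⟨x, hv, hα⟩ := h
    refine ⟨x, ?_, ?_⟩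
    · rw [hv]; exact (cs.simple_mul_simple_cancel_right x).symm
    · rw [hα, hv, mulapp, hee, sigma_simple_self cs σ hσ, map_neg]
  · -- basis_indep
    intro v
    have h0 : LinearIndependent ℝ (fun y : B => e y) := by
      have hb := (Pi.basisFun ℝ B).linearIndependent
      have : ⇑(Pi.basisFun ℝ B) = fun y : B => e y := by
        funext y; simp [e]
      rwa [this] at hb
    have h1 := h0.comp (Fintype.equivFin B).symm (Equiv.injective _)
    set T : (B → ℝ) ≃ₗ[ℝ] (B → ℝ) := (σ v).trans (LinearEquiv.neg ℝ) with hT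
    have h2 := h1.map' T.toLinearMap T.ker
    exact h2
  · -- basis_span
    intro v
    rw [eq_top_iff]
    rintro u -
    rw [CG_expand cs σ v u]
    exact Submodule.sum_mem _ fun i _ =>
      Submodule.smul_mem _ _ (Submodule.subset_span ⟨i, rfl⟩)
  · -- ingoing
    intro v α
    constructor
    · rintro (⟨v', x, hv, hα⟩ | h)
      · refine ⟨(Fintype.equivFin B) x, ?_⟩
        show α = -(σ v (Pi.single ((Fintype.equivFin B).symm ((Fintype.equivFin B) x)) 1))
        rw [Equiv.symm_apply_apply]
        have hv' : v' = v * cs.simple x := by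
          rw [hv]; exact (cs.simple_mul_simple_cancel_right x).symm
        rw [hα, hv', mulapp, hee, sigma_simple_self cs σ hσ, map_neg]
      · exact h.elim
    · rintro ⟨i, hi⟩
      refine Or.inl ⟨v * cs.simple ((Fintype.equivFin B).symm i), ?_⟩
      refine ⟨(Fintype.equivFin B).symm i, (cs.simple_mul_simple_cancel_right _).symm, ?_⟩
      rw [hi]
      show _ = σ (v * cs.simple _) (Pi.single _ 1)
      rw [mulapp, hee, sigma_simple_self cs σ hσ, map_neg]
      rfl
  · -- inf_noninv
    intro v α h
    exact h.elim
  · -- step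
    intro v v' α h
    obtain ⟨x, hv', hα⟩ := h
    have hv'inv : ∀ β : B → ℝ, σ v'⁻¹ β = σ (cs.simple x) (σ v⁻¹ β) := by
      intro β
      rw [hv', mul_inv_rev, cs.inv_simple, mulapp]
    ext β
    simp only [Set.mem_diff, Set.mem_singleton_iff]
    constructor
    · rintro ⟨hβp, hβn⟩
      rw [CG_pos] at hβp
      obtain ⟨⟨u, y, hβ⟩, hcone'⟩ := hβp
      have hnotcone : ¬ ∀ b, σ v⁻¹ β b ≤ 0 := by
        intro hc
        exact hβn (by rw [CG_pos]; exact ⟨⟨u, y, hβ⟩, hc⟩)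
      have hsplit : ∀ b, b ≠ x → σ v⁻¹ β b ≤ 0 := by
        intro b hb
        have hc := hcone' b
        rw [hv'inv, sigma_coord cs σ hσ x _ b hb] at hc
        exact hc
      have hγroot : σ v⁻¹ β = σ (v⁻¹ * u) (e y) := by rw [hβ, mulapp]
      have hdich := sigma_dich cs σ hσ (v⁻¹ * u) y
      rw [← hγroot] at hdich
      rcases hdich with hpos | hneg
      swap
      · exact absurd hneg hnotcone
      set r := σ v⁻¹ β x with hr
      have hγeq : σ v⁻¹ β = r • (e x) := by
        funext b
        by_cases hb : b = x
        · subst hb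
          simp only [Pi.smul_apply, smul_eq_mul]
          rw [e, Pi.single_eq_same, mul_one]
        · have h1 := hsplit b hb
          have h2 := hpos b
          have h3 : σ v⁻¹ β b = 0 := le_antisymm h1 h2
          simp only [Pi.smul_apply, smul_eq_mul]
          rw [h3, e, Pi.single_eq_of_ne hb, mul_zero]
      have hnorm1 : Bf M (σ v⁻¹ β) (σ v⁻¹ β) = 1 := by
        rw [hγroot]; exact sigma_norm cs σ hσ _ _
      rw [hγeq, Bf_smul_left, Bf_symm, Bf_smul_left, Bf_symm, Bf_single_single, kf_diag]
        at hnorm1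
      have hrpos : 0 < r := by
        refine lt_of_le_of_ne (hpos x) (Ne.symm ?_)
        intro h0
        apply hnotcone
        intro b
        rw [hγeq, h0]
        simp
      have hr1 : r = 1 := by
        have hfac : (r - 1) * (r + 1) = 0 := by nlinarith
        rcases mul_eq_zero.mp hfac with h9 | h9
        · linarith
        · linarith
      have hβv : β = σ v (σ v⁻¹ β) := by
        have h4 := sigma_inv_apply σ v⁻¹ β
        rw [inv_inv] at h4
        exact h4.symm
      rw [hα, hβv, hγeq, hr1, one_smul]
      rfl
    · rintro rfl
      have h2 : σ v⁻¹ β = e x := by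
        rw [hα, hee]; exact sigma_inv_apply σ v (e x)
      constructor
      · rw [CG_pos]
        refine ⟨⟨v, x, hα⟩, ?_⟩
        intro b
        rw [hv'inv, h2, sigma_simple_self cs σ hσ, Pi.neg_apply]
        have := e_nonneg x b
        linarith
      · intro hmem
        rw [CG_pos] at hmem
        have h3 := hmem.2 x
        rw [h2] at h3
        rw [e, Pi.single_eq_same] at h3
        linarith
  · -- posdet
    intro v v' h
    by_contra hne
    have hw : v⁻¹ * v' ≠ 1 := fun h1 => hne (inv_mul_eq_one.mp h1)
    obtain ⟨y, hy⟩ := cs.exists_rightDescent_of_ne_one hw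
    have hmem : σ v' (e y) ∈ (CG M cs σ).pos v := by
      rw [CG_pos]
      refine ⟨⟨v', y, rfl⟩, ?_⟩
      intro b
      have h4 : σ v⁻¹ (σ v' (e y)) = σ (v⁻¹ * v') (e y) := (mulapp σ _ _ _).symm
      rw [h4]
      exact negcore cs σ hσ _ y hy b
    rw [h, CG_pos] at hmem
    have h5 := hmem.2 y
    rw [sigma_inv_apply σ v' (e y)] at h5
    rw [e, Pi.single_eq_same] at h5
    linarith
  · -- connected
    intro v v'
    have key : ∀ (l : List B) (g : W),
        Relation.ReflTransGen (fun a b => ∃ α, (CG M cs σ).adj a b α) g (g * cs.wordProd l) := by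
      intro l
      induction l with
      | nil => intro g; rw [cs.wordProd_nil, mul_one]
      | cons a l2 ih =>
        intro g
        rw [cs.wordProd_cons, ← mul_assoc]
        exact Relation.ReflTransGen.head ⟨σ g (Pi.single a 1), a, rfl, rfl⟩ (ih (g * cs.simple a))
    obtain ⟨l, hl⟩ := cs.wordProd_surjective (v⁻¹ * v')
    have h6 := key l v
    rw [hl, mul_inv_cancel_left] at h6
    exact h6

end CayleyAux

/-- The Cayley graph of a Coxeter system `(G,X)` with the geometric representation
`σ : G → GL(V)` on `V = Span_ℝ{α_x}` (with `σ_s(α_t) = α_t + 2cos(π/m_{st})·α_s`,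
where `m_{st} = 0` encodes `∞`) is a Matsumoto graph: the arrow `x : g → gx` carries the
ray of `σ_g(α_x)`, there are no infinite edges, and the ingoing roots at `g` (spanning
`R⁺_g`) are the `-σ_g(α_x)`, `x ∈ X`. All four axioms hold. -/
theorem cayley_coxeter_matsumoto {B W : Type*} [Fintype B] [DecidableEq B] [Group W]
    {Mx : CoxeterMatrix B} (cs : CoxeterSystem Mx W)
    (σ : W →* ((B → ℝ) ≃ₗ[ℝ] (B → ℝ)))
    (hσ : ∀ s t : B, σ (cs.simple s) (Pi.single t 1 : B → ℝ) =
      (Pi.single t 1 : B → ℝ) + (2 * Real.cos (Real.pi / (Mx s t : ℝ))) • (Pi.single s 1 : B → ℝ)) :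
    MatsumotoGraph.Axioms
      { Vx := W
        adj := fun g g' β => ∃ x : B, g' = g * cs.simple x ∧ β = σ g (Pi.single x 1 : B → ℝ)
        inf := fun _ _ => False
        basisAt := fun g i =>
          -(σ g (Pi.single ((Fintype.equivFin B).symm i) 1 : B → ℝ)) } := by
  exact CayleyAux.main cs σ hσ
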